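/- Particular case of the main theorem: if ‖·‖_α is a uniform crossnorm on X⊗Y, then the operator norm on B[X⊗_α Y] restricted to the tensor product of operator algebras B[X]⊗B[Y] is a reasonable crossnorm on B[X]⊗B[Y]. -/

import Mathlib

set_option maxHeartbeats 1000000
set_option synthInstance.maxHeartbeats 200000


open scoped TensorProduct
open TensorProduct

noncomputable section

variable (𝕜 : Type*) [RCLike 𝕜]
variable {E F G H : Type*}
  [NormedAddCommGroup E] [NormedSpace 𝕜 E]
  [NormedAddCommGroup F] [NormedSpace 𝕜 F]
  [NormedAddCommGroup G] [NormedSpace 𝕜 G]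
  [NormedAddCommGroup H] [NormedSpace 𝕜 H]

/-- `N` is a norm on the `𝕜`-module `M`. -/
def IsNormOn {M : Type*} [AddCommGroup M] [Module 𝕜 M] (N : M → ℝ) : Prop :=
  (∀ u, N u = 0 ↔ u = 0) ∧ (∀ (c : 𝕜) (u : M), N (c • u) = ‖c‖ * N u) ∧
    (∀ u v : M, N (u + v) ≤ N u + N v)

/-- The linear functional `f ⊗ g` on `E ⊗ F`, with `(f ⊗ g)(x ⊗ y) = f x * g y`. -/
def dualTensorFun (f : E →L[𝕜] 𝕜) (g : F →L[𝕜] 𝕜) : E ⊗[𝕜] F →ₗ[𝕜] 𝕜 :=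
  (TensorProduct.lid 𝕜 𝕜).toLinearMap ∘ₗ
    TensorProduct.map (f : E →ₗ[𝕜] 𝕜) (g : F →ₗ[𝕜] 𝕜)

/-- The injective norm on the algebraic tensor product of normed spaces. -/
def injNorm (u : E ⊗[𝕜] F) : ℝ :=
  sSup {r | ∃ (f : E →L[𝕜] 𝕜) (g : F →L[𝕜] 𝕜),
    ‖f‖ ≤ 1 ∧ ‖g‖ ≤ 1 ∧ r = ‖dualTensorFun 𝕜 f g u‖}

/-- The projective norm on the algebraic tensor product of normed spaces. -/
def projNorm (u : E ⊗[𝕜] F) : ℝ :=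
  sInf {r | ∃ l : List (E × F), u = (l.map fun p => p.1 ⊗ₜ[𝕜] p.2).sum ∧
    r = (l.map fun p => ‖p.1‖ * ‖p.2‖).sum}

/-- `N` is a reasonable crossnorm on `E ⊗ F`: it is a norm, `N (x ⊗ y) ≤ ‖x‖‖y‖`, and every
`f ⊗ g` with `f, g` continuous functionals is bounded with dual norm at most `‖f‖‖g‖`. -/
def IsReasonableCrossnorm (N : E ⊗[𝕜] F → ℝ) : Prop :=
  IsNormOn 𝕜 N ∧ (∀ (x : E) (y : F), N (x ⊗ₜ[𝕜] y) ≤ ‖x‖ * ‖y‖) ∧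
    ∀ (f : E →L[𝕜] 𝕜) (g : F →L[𝕜] 𝕜) (u : E ⊗[𝕜] F),
      ‖dualTensorFun 𝕜 f g u‖ ≤ ‖f‖ * ‖g‖ * N u

/-- `T` is bounded from `(E ⊗ F, Nd)` to `(G ⊗ H, Nc)`. -/
def IsBddOn (Nd : E ⊗[𝕜] F → ℝ) (Nc : G ⊗[𝕜] H → ℝ)
    (T : E ⊗[𝕜] F →ₗ[𝕜] G ⊗[𝕜] H) : Prop :=
  ∃ c : ℝ, 0 ≤ c ∧ ∀ u, Nc (T u) ≤ c * Nd u

/-- The operator norm of `T` from `(E ⊗ F, Nd)` to `(G ⊗ H, Nc)`. -/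
def opNormOn (Nd : E ⊗[𝕜] F → ℝ) (Nc : G ⊗[𝕜] H → ℝ)
    (T : E ⊗[𝕜] F →ₗ[𝕜] G ⊗[𝕜] H) : ℝ :=
  sInf {c | 0 ≤ c ∧ ∀ u, Nc (T u) ≤ c * Nd u}

/-- The dual norm of a linear functional `φ` on `(E ⊗ F, N)`. -/
def dualNormOn (N : E ⊗[𝕜] F → ℝ) (φ : E ⊗[𝕜] F →ₗ[𝕜] 𝕜) : ℝ :=
  sInf {c | 0 ≤ c ∧ ∀ u, ‖φ u‖ ≤ c * N u}

/-- The pair of norms `(NA, NB)` is uniform: `A ⊗ B` is bounded with bound `‖A‖‖B‖`. -/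
def IsUniformPair (NA : E ⊗[𝕜] F → ℝ) (NB : G ⊗[𝕜] H → ℝ) : Prop :=
  ∀ (A : E →L[𝕜] G) (B : F →L[𝕜] H) (u : E ⊗[𝕜] F),
    NB (TensorProduct.map (A : E →ₗ[𝕜] G) (B : F →ₗ[𝕜] H) u) ≤ ‖A‖ * ‖B‖ * NA u

/-- The canonical action of `B[E,G] ⊗ B[F,H]` as linear maps from `E ⊗ F` to `G ⊗ H`,
sending `Σⱼ Aⱼ ⊗ Bⱼ` to `Σᵢ xᵢ ⊗ yᵢ ↦ Σⱼ Σᵢ Aⱼxᵢ ⊗ Bⱼyᵢ`. -/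
def opT : ((E →L[𝕜] G) ⊗[𝕜] (F →L[𝕜] H)) →ₗ[𝕜] (E ⊗[𝕜] F →ₗ[𝕜] G ⊗[𝕜] H) :=
  (TensorProduct.homTensorHomMap (RingHom.id 𝕜) E F G H) ∘ₗ
    TensorProduct.map (ContinuousLinearMap.coeLM 𝕜) (ContinuousLinearMap.coeLM 𝕜)

variable {X Y V W : Type*}
  [NormedAddCommGroup X] [NormedSpace 𝕜 X]
  [NormedAddCommGroup Y] [NormedSpace 𝕜 Y]
  [NormedAddCommGroup V] [NormedSpace 𝕜 V]
  [NormedAddCommGroup W] [NormedSpace 𝕜 W]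

/-! ### Auxiliary material for `stmt10` -/

section Aux

/-- Contraction of a tensor with a functional on the left factor. -/
def contractL (f : E →L[𝕜] 𝕜) : E ⊗[𝕜] F →ₗ[𝕜] F :=
  (TensorProduct.lid 𝕜 F).toLinearMap ∘ₗ
    TensorProduct.map (f : E →ₗ[𝕜] 𝕜) LinearMap.id

/-- Contraction of a tensor with a functional on the right factor. -/
def contractR (g : F →L[𝕜] 𝕜) : E ⊗[𝕜] F →ₗ[𝕜] E :=
  (TensorProduct.rid 𝕜 E).toLinearMap ∘ₗ
    TensorProduct.map LinearMap.id (g : F →ₗ[𝕜] 𝕜)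

@[simp] lemma contractL_tmul (f : E →L[𝕜] 𝕜) (x : E) (y : F) :
    contractL 𝕜 f (x ⊗ₜ[𝕜] y) = f x • y := by
  simp [contractL]

@[simp] lemma contractR_tmul (g : F →L[𝕜] 𝕜) (x : E) (y : F) :
    contractR 𝕜 g (x ⊗ₜ[𝕜] y) = g y • x := by
  simp [contractR]

@[simp] lemma dualTensorFun_tmul (f : E →L[𝕜] 𝕜) (g : F →L[𝕜] 𝕜) (x : E) (y : F) :
    dualTensorFun 𝕜 f g (x ⊗ₜ[𝕜] y) = f x * g y := by
  simp [dualTensorFun]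

lemma dualTensorFun_eq_contractL (f : E →L[𝕜] 𝕜) (g : F →L[𝕜] 𝕜) (u : E ⊗[𝕜] F) :
    dualTensorFun 𝕜 f g u = g (contractL 𝕜 f u) := by
  induction u using TensorProduct.induction_on with
  | zero => simp
  | tmul x y => simp [smul_eq_mul]
  | add u v hu hv => simp [map_add, hu, hv]

lemma dualTensorFun_eq_contractR (f : E →L[𝕜] 𝕜) (g : F →L[𝕜] 𝕜) (u : E ⊗[𝕜] F) :
    dualTensorFun 𝕜 f g u = f (contractR 𝕜 g u) := by
  induction u using TensorProduct.induction_on with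
  | zero => simp
  | tmul x y => simp [smul_eq_mul, mul_comm]
  | add u v hu hv => simp [map_add, hu, hv]

/-- Continuous functionals of the form `f ⊗ g` separate points of `E ⊗ F`. -/
lemma tensor_eq_zero_of_contractL_eq_zero [CompleteSpace 𝕜] (u : E ⊗[𝕜] F)
    (h : ∀ f : E →L[𝕜] 𝕜, contractL 𝕜 f u = 0) : u = 0 := by
  obtain ⟨s, rfl⟩ := TensorProduct.exists_finset u
  set M : Submodule 𝕜 E := Submodule.span 𝕜 (Prod.fst '' (s : Set (E × F))) with hM
  have hMfin : FiniteDimensional 𝕜 M :=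
    FiniteDimensional.span_of_finite 𝕜 (s.finite_toSet.image _)
  let b := Module.finBasis 𝕜 M
  have hext : ∀ k, ∃ f : E →L[𝕜] 𝕜, ∀ m : M, f m = b.coord k m := by
    intro k
    obtain ⟨g, hg, -⟩ :=
      exists_extension_norm_eq (𝕜 := 𝕜) M (LinearMap.toContinuousLinearMap (b.coord k))
    exact ⟨g, fun m => by simpa using hg m⟩
  choose f hf using hext
  have hmem : ∀ p ∈ s, p.1 ∈ M := fun p hp =>
    Submodule.subset_span ⟨p, hp, rfl⟩
  have hrep : ∀ p ∈ s, p.1 = ∑ k, f k p.1 • (b k : E) := by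
    intro p hp
    have hcoord : ∀ k, f k p.1 = b.repr ⟨p.1, hmem p hp⟩ k := fun k =>
      (hf k ⟨p.1, hmem p hp⟩).trans (b.coord_apply _ _)
    calc p.1 = ((⟨p.1, hmem p hp⟩ : M) : E) := rfl
      _ = ((∑ k, b.repr ⟨p.1, hmem p hp⟩ k • b k : M) : E) := by rw [b.sum_repr]
      _ = ∑ k, b.repr ⟨p.1, hmem p hp⟩ k • (b k : E) := by push_cast; rfl
      _ = ∑ k, f k p.1 • (b k : E) := Finset.sum_congr rfl fun k _ => by rw [hcoord k]
  have hc : ∀ k, contractL 𝕜 (f k) (∑ p ∈ s, p.1 ⊗ₜ[𝕜] p.2) = ∑ p ∈ s, f k p.1 • p.2 := by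
    intro k
    rw [map_sum]
    exact Finset.sum_congr rfl fun p _ => contractL_tmul 𝕜 _ _ _
  calc (∑ p ∈ s, p.1 ⊗ₜ[𝕜] p.2)
      = ∑ p ∈ s, (∑ k, f k p.1 • (b k : E)) ⊗ₜ[𝕜] p.2 := by
        refine Finset.sum_congr rfl fun p hp => ?_
        rw [← hrep p hp]
    _ = ∑ p ∈ s, ∑ k, f k p.1 • ((b k : E) ⊗ₜ[𝕜] p.2) := by
        refine Finset.sum_congr rfl fun p hp => ?_
        rw [TensorProduct.sum_tmul]
        exact Finset.sum_congr rfl fun k _ => by rw [TensorProduct.smul_tmul']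
    _ = ∑ k, (b k : E) ⊗ₜ[𝕜] (∑ p ∈ s, f k p.1 • p.2) := by
        rw [Finset.sum_comm]
        refine Finset.sum_congr rfl fun k _ => ?_
        rw [TensorProduct.tmul_sum]
        exact Finset.sum_congr rfl fun p _ => by rw [TensorProduct.tmul_smul]
    _ = 0 := by
        refine Finset.sum_eq_zero fun k _ => ?_
        rw [← hc k, h (f k), TensorProduct.tmul_zero]

lemma IsNormOn.nonneg {M : Type*} [AddCommGroup M] [Module 𝕜 M] {N : M → ℝ}
    (h : IsNormOn 𝕜 N) (u : M) : 0 ≤ N u := by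
  have h0 : N 0 = 0 := (h.1 0).mpr rfl
  have hneg : N (-u) = N u := by
    have : (-u) = ((-1 : 𝕜) • u) := by simp
    rw [this, h.2.1]; simp
  have htri := h.2.2 u (-u)
  rw [add_neg_cancel, h0, hneg] at htri
  linarith

lemma opNormOn_nonneg (Nd : E ⊗[𝕜] F → ℝ) (Nc : G ⊗[𝕜] H → ℝ)
    (T : E ⊗[𝕜] F →ₗ[𝕜] G ⊗[𝕜] H) : 0 ≤ opNormOn 𝕜 Nd Nc T :=
  Real.sInf_nonneg fun _ hc => hc.1

lemma opNormOn_le (Nd : E ⊗[𝕜] F → ℝ) (Nc : G ⊗[𝕜] H → ℝ)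
    (T : E ⊗[𝕜] F →ₗ[𝕜] G ⊗[𝕜] H) {c : ℝ} (hc : 0 ≤ c)
    (hb : ∀ u, Nc (T u) ≤ c * Nd u) : opNormOn 𝕜 Nd Nc T ≤ c :=
  csInf_le ⟨0, fun _ hd => hd.1⟩ ⟨hc, hb⟩

lemma le_opNormOn_mul (Nd : E ⊗[𝕜] F → ℝ) (Nc : G ⊗[𝕜] H → ℝ)
    (T : E ⊗[𝕜] F →ₗ[𝕜] G ⊗[𝕜] H) (hNd : ∀ u, 0 ≤ Nd u)
    (hbdd : IsBddOn 𝕜 Nd Nc T) (u : E ⊗[𝕜] F) :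
    Nc (T u) ≤ opNormOn 𝕜 Nd Nc T * Nd u := by
  obtain ⟨c₀, hc₀, hb₀⟩ := hbdd
  have hne : Set.Nonempty {c | 0 ≤ c ∧ ∀ u, Nc (T u) ≤ c * Nd u} := ⟨c₀, hc₀, hb₀⟩
  rcases eq_or_lt_of_le (hNd u) with h0 | hpos
  · have : Nc (T u) ≤ 0 := by
      have := hb₀ u; rw [← h0] at this; simpa using this
    calc Nc (T u) ≤ 0 := this
      _ = opNormOn 𝕜 Nd Nc T * Nd u := by rw [← h0, mul_zero]
  · rw [← div_le_iff₀ hpos]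
    refine le_csInf hne fun c hc => ?_
    rw [div_le_iff₀ hpos]
    exact hc.2 u

@[simp] lemma opT_tmul (A : E →L[𝕜] G) (B : F →L[𝕜] H) :
    opT 𝕜 (A ⊗ₜ[𝕜] B) = TensorProduct.map (A : E →ₗ[𝕜] G) (B : F →ₗ[𝕜] H) := by
  simp [opT, ContinuousLinearMap.coeLM]

variable {X Y : Type*} [NormedAddCommGroup X] [NormedSpace 𝕜 X]
  [NormedAddCommGroup Y] [NormedSpace 𝕜 Y]

lemma isBddOn_opT {N : X ⊗[𝕜] Y → ℝ} (hN : IsNormOn 𝕜 N) (hu : IsUniformPair 𝕜 N N)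
    (L : (X →L[𝕜] X) ⊗[𝕜] (Y →L[𝕜] Y)) : IsBddOn 𝕜 N N (opT 𝕜 L) := by
  induction L using TensorProduct.induction_on with
  | zero =>
    refine ⟨0, le_refl 0, fun u => ?_⟩
    rw [map_zero (opT 𝕜), LinearMap.zero_apply, (hN.1 0).mpr rfl, zero_mul]
  | tmul A B =>
    refine ⟨‖A‖ * ‖B‖, mul_nonneg (norm_nonneg _) (norm_nonneg _), fun u => ?_⟩
    rw [opT_tmul]
    exact hu A B u
  | add L₁ L₂ h₁ h₂ =>
    obtain ⟨c₁, hc₁, hb₁⟩ := h₁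
    obtain ⟨c₂, hc₂, hb₂⟩ := h₂
    refine ⟨c₁ + c₂, by linarith, fun u => ?_⟩
    rw [map_add (opT 𝕜) L₁ L₂, LinearMap.add_apply]
    calc N (opT 𝕜 L₁ u + opT 𝕜 L₂ u) ≤ N (opT 𝕜 L₁ u) + N (opT 𝕜 L₂ u) := hN.2.2 _ _
      _ ≤ c₁ * N u + c₂ * N u := add_le_add (hb₁ u) (hb₂ u)
      _ = (c₁ + c₂) * N u := by ring

lemma contractR_apply_eq (g : (Y →L[𝕜] Y) →L[𝕜] 𝕜) (φ : X →L[𝕜] 𝕜) (x : X)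
    (L : (X →L[𝕜] X) ⊗[𝕜] (Y →L[𝕜] Y)) :
    φ ((contractR 𝕜 g L) x) =
      g (contractL 𝕜 (φ.comp ((ContinuousLinearMap.apply 𝕜 X) x)) L) := by
  induction L using TensorProduct.induction_on with
  | zero => simp
  | tmul A B => simp [smul_eq_mul, mul_comm]
  | add u v hu hv => simp [map_add, LinearMap.add_apply, hu, hv]

lemma contractL_apply_eq (φ : X →L[𝕜] 𝕜) (x : X) (ψ : Y →L[𝕜] 𝕜) (y : Y)
    (L : (X →L[𝕜] X) ⊗[𝕜] (Y →L[𝕜] Y)) :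
    ψ ((contractL 𝕜 (φ.comp ((ContinuousLinearMap.apply 𝕜 X) x)) L) y) =
      dualTensorFun 𝕜 φ ψ (opT 𝕜 L (x ⊗ₜ[𝕜] y)) := by
  induction L using TensorProduct.induction_on with
  | zero => simp
  | tmul A B => simp [smul_eq_mul]
  | add u v hu hv => simp [map_add, LinearMap.add_apply, hu, hv]

end Aux

/-- particular case `V = X`, `W = Y`: the operator norm on `B[X ⊗_α Y]`
restricted to `B[X] ⊗ B[Y]` is a reasonable crossnorm. -/
theorem stmt10 (N : X ⊗[𝕜] Y → ℝ) (hN : IsReasonableCrossnorm 𝕜 N)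
    (hu : IsUniformPair 𝕜 N N) :
    IsReasonableCrossnorm 𝕜
      (fun L : (X →L[𝕜] X) ⊗[𝕜] (Y →L[𝕜] Y) => opNormOn 𝕜 N N (opT 𝕜 L)) := by
  obtain ⟨hNnorm, hcross, hdual⟩ := hN
  have nn : ∀ u, 0 ≤ N u := hNnorm.nonneg 𝕜
  set Q : (X →L[𝕜] X) ⊗[𝕜] (Y →L[𝕜] Y) → ℝ :=
    fun L => opNormOn 𝕜 N N (opT 𝕜 L) with hQ
  have hQnonneg : ∀ L, 0 ≤ Q L := fun L => opNormOn_nonneg 𝕜 N N _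
  have hbdd : ∀ L, IsBddOn 𝕜 N N (opT 𝕜 L) := isBddOn_opT 𝕜 hNnorm hu
  have hkey : ∀ L u, N (opT 𝕜 L u) ≤ Q L * N u :=
    fun L u => le_opNormOn_mul 𝕜 N N _ nn (hbdd L) u
  have hQzero : Q 0 = 0 := by
    refine le_antisymm ?_ (hQnonneg 0)
    refine opNormOn_le 𝕜 N N _ le_rfl fun u => ?_
    rw [map_zero (opT 𝕜), LinearMap.zero_apply, (hNnorm.1 0).mpr rfl, zero_mul]
  refine ⟨⟨?_, ?_, ?_⟩, ?_, ?_⟩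
  · -- definiteness
    intro L
    constructor
    · intro hL0
      -- opT L = 0
      have hT : ∀ u, opT 𝕜 L u = 0 := by
        intro u
        have h1 := hkey L u
        rw [hL0, zero_mul] at h1
        exact (hNnorm.1 _).mp (le_antisymm h1 (nn _))
      -- contractL vanishes for all functionals of the special form
      have hD : ∀ (φ : X →L[𝕜] 𝕜) (x : X),
          contractL 𝕜 (φ.comp ((ContinuousLinearMap.apply 𝕜 X) x)) L = 0 := by
        intro φ x
        ext y
        refine NormedSpace.eq_zero_of_forall_dual_eq_zero 𝕜 fun ψ => ?_
        rw [contractL_apply_eq, hT, map_zero (dualTensorFun 𝕜 φ ψ)]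
      -- contractR vanishes for all g
      have hC : ∀ g : (Y →L[𝕜] Y) →L[𝕜] 𝕜, contractR 𝕜 g L = 0 := by
        intro g
        ext x
        refine NormedSpace.eq_zero_of_forall_dual_eq_zero 𝕜 fun φ => ?_
        rw [contractR_apply_eq, hD, map_zero g]
      -- all f ⊗ g vanish on L
      have hfg : ∀ (f : (X →L[𝕜] X) →L[𝕜] 𝕜) (g : (Y →L[𝕜] Y) →L[𝕜] 𝕜),
          dualTensorFun 𝕜 f g L = 0 := by
        intro f g
        rw [dualTensorFun_eq_contractR, hC, map_zero f]
      -- hence L = 0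
      refine tensor_eq_zero_of_contractL_eq_zero 𝕜 L fun f => ?_
      refine NormedSpace.eq_zero_of_forall_dual_eq_zero 𝕜 fun g => ?_
      rw [← dualTensorFun_eq_contractL]
      exact hfg f g
    · rintro rfl
      exact hQzero
  · -- homogeneity
    intro c L
    rcases eq_or_ne c 0 with rfl | hc
    · simp [hQzero]
    · have hcpos : (0 : ℝ) < ‖c‖ := norm_pos_iff.mpr hc
      have h1 : Q (c • L) ≤ ‖c‖ * Q L := by
        refine opNormOn_le 𝕜 N N _ (mul_nonneg hcpos.le (hQnonneg L)) fun u => ?_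
        rw [map_smul (opT 𝕜) c L, LinearMap.smul_apply, hNnorm.2.1]
        calc ‖c‖ * N (opT 𝕜 L u) ≤ ‖c‖ * (Q L * N u) :=
              mul_le_mul_of_nonneg_left (hkey L u) hcpos.le
          _ = ‖c‖ * Q L * N u := by ring
      have h2 : Q L ≤ ‖c‖⁻¹ * Q (c • L) := by
        refine opNormOn_le 𝕜 N N _
          (mul_nonneg (inv_nonneg.mpr hcpos.le) (hQnonneg (c • L))) fun u => ?_
        have hLc : opT 𝕜 L u = c⁻¹ • opT 𝕜 (c • L) u := by
          rw [map_smul (opT 𝕜) c L, LinearMap.smul_apply, smul_smul,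
            inv_mul_cancel₀ hc, one_smul]
        rw [hLc, hNnorm.2.1, norm_inv]
        calc ‖c‖⁻¹ * N (opT 𝕜 (c • L) u) ≤ ‖c‖⁻¹ * (Q (c • L) * N u) :=
              mul_le_mul_of_nonneg_left (hkey (c • L) u) (inv_nonneg.mpr hcpos.le)
          _ = ‖c‖⁻¹ * Q (c • L) * N u := by ring
      refine le_antisymm h1 ?_
      have := mul_le_mul_of_nonneg_left h2 hcpos.le
      calc ‖c‖ * Q L ≤ ‖c‖ * (‖c‖⁻¹ * Q (c • L)) := this
        _ = Q (c • L) := by field_simp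
  · -- triangle inequality
    intro L₁ L₂
    refine opNormOn_le 𝕜 N N _ (add_nonneg (hQnonneg L₁) (hQnonneg L₂)) fun u => ?_
    rw [map_add (opT 𝕜) L₁ L₂, LinearMap.add_apply]
    calc N (opT 𝕜 L₁ u + opT 𝕜 L₂ u) ≤ N (opT 𝕜 L₁ u) + N (opT 𝕜 L₂ u) := hNnorm.2.2 _ _
      _ ≤ Q L₁ * N u + Q L₂ * N u := add_le_add (hkey L₁ u) (hkey L₂ u)
      _ = (Q L₁ + Q L₂) * N u := by ring
  · -- crossnorm inequality
    intro A B
    refine opNormOn_le 𝕜 N N _ (mul_nonneg (norm_nonneg _) (norm_nonneg _)) fun u => ?_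
    rw [opT_tmul]
    exact hu A B u
  · -- reasonableness
    intro f g L
    have hDnorm : ∀ (φ : X →L[𝕜] 𝕜) (x : X),
        ‖contractL 𝕜 (φ.comp ((ContinuousLinearMap.apply 𝕜 X) x)) L‖ ≤
          Q L * ‖x‖ * ‖φ‖ := by
      intro φ x
      refine ContinuousLinearMap.opNorm_le_bound _
        (mul_nonneg (mul_nonneg (hQnonneg L) (norm_nonneg x)) (norm_nonneg φ)) fun y => ?_
      refine NormedSpace.norm_le_dual_bound 𝕜 _
        (mul_nonneg (mul_nonneg (mul_nonneg (hQnonneg L) (norm_nonneg x))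
          (norm_nonneg φ)) (norm_nonneg y)) fun ψ => ?_
      rw [show ((ψ : (Y →L[𝕜] 𝕜)) _ = _) from rfl]
      rw [contractL_apply_eq]
      calc ‖dualTensorFun 𝕜 φ ψ (opT 𝕜 L (x ⊗ₜ[𝕜] y))‖
          ≤ ‖φ‖ * ‖ψ‖ * N (opT 𝕜 L (x ⊗ₜ[𝕜] y)) := hdual φ ψ _
        _ ≤ ‖φ‖ * ‖ψ‖ * (Q L * N (x ⊗ₜ[𝕜] y)) := by
            refine mul_le_mul_of_nonneg_left (hkey L _)
              (mul_nonneg (norm_nonneg _) (norm_nonneg _))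
        _ ≤ ‖φ‖ * ‖ψ‖ * (Q L * (‖x‖ * ‖y‖)) := by
            refine mul_le_mul_of_nonneg_left
              (mul_le_mul_of_nonneg_left (hcross x y) (hQnonneg L))
              (mul_nonneg (norm_nonneg _) (norm_nonneg _))
        _ = Q L * ‖x‖ * ‖φ‖ * ‖y‖ * ‖ψ‖ := by ring
    have hCnorm : ‖contractR 𝕜 g L‖ ≤ ‖g‖ * Q L := by
      refine ContinuousLinearMap.opNorm_le_bound _
        (mul_nonneg (norm_nonneg g) (hQnonneg L)) fun x => ?_
      refine NormedSpace.norm_le_dual_bound 𝕜 _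
        (mul_nonneg (mul_nonneg (norm_nonneg g) (hQnonneg L)) (norm_nonneg x)) fun φ => ?_
      rw [show ((φ : (X →L[𝕜] 𝕜)) _ = _) from rfl]
      rw [contractR_apply_eq]
      calc ‖g (contractL 𝕜 (φ.comp ((ContinuousLinearMap.apply 𝕜 X) x)) L)‖
          ≤ ‖g‖ * ‖contractL 𝕜 (φ.comp ((ContinuousLinearMap.apply 𝕜 X) x)) L‖ :=
            g.le_opNorm _
        _ ≤ ‖g‖ * (Q L * ‖x‖ * ‖φ‖) :=
            mul_le_mul_of_nonneg_left (hDnorm φ x) (norm_nonneg g)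
        _ = ‖g‖ * Q L * ‖x‖ * ‖φ‖ := by ring
    calc ‖dualTensorFun 𝕜 f g L‖ = ‖f (contractR 𝕜 g L)‖ := by
          rw [dualTensorFun_eq_contractR]
      _ ≤ ‖f‖ * ‖contractR 𝕜 g L‖ := f.le_opNorm _
      _ ≤ ‖f‖ * (‖g‖ * Q L) := mul_le_mul_of_nonneg_left hCnorm (norm_nonneg f)
      _ = ‖f‖ * ‖g‖ * Q L := by ring
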